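/- Let Δ > 0, b ∈ (0,1), and let i ≥ 2 be an integer such that b·(6i² − 6i + 1) > 1. Then the sequence (h_k)_{0 ≤ k ≤ i−1} is unimodal with a minimum: there exists an integer k* with 0 ≤ k* ≤ i−1 such that h₀ ≥ h₁ ≥ ⋯ ≥ h_{k*} and h_{k*} ≤ h_{k*+1} ≤ ⋯ ≤ h_{i−1}. -/
import Mathlib


noncomputable section

/-- The ratio h_k = w_k / u_k of the per-layer cost weight to the per-layer volume
weight in the two-dimensional staircase optimization, with c₀ = 1/(1−b),
c₁ = b/(1−b)², c₂ = (b+b²)/(1−b)³. -/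
def hseq (Δ b : ℝ) (i k : ℕ) : ℝ :=
  (2 * Δ / (3 * (i : ℝ))) *
    (3 * (i : ℝ) ^ 2 * ((b + b ^ 2) / (1 - b) ^ 3) +
      (6 * (i : ℝ) * (k : ℝ) + 3 * (i : ℝ)) * (b / (1 - b) ^ 2) +
      (1 + 3 * (k : ℝ) + 3 * (k : ℝ) ^ 2) * (1 / (1 - b))) /
    ((1 + 2 * (k : ℝ)) * (1 / (1 - b)) + 2 * (i : ℝ) * (b / (1 - b) ^ 2))

/-- The sign polynomial controlling h_{k+1} - h_k. -/
def fpoly (b : ℝ) (i k : ℕ) : ℝ :=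
  12*(i:ℝ)*((k:ℝ)+1)*b + (6*(k:ℝ)^2+12*(k:ℝ)+4)*(1-b) - 6*(i:ℝ)^2*b

lemma hstep_mono (Δ b : ℝ) (hΔ : 0 < Δ) (hb : 0 < b) (hb1 : b < 1) (i k : ℕ)
    (hi : 1 ≤ i) (hf : 0 ≤ fpoly b i k) : hseq Δ b i k ≤ hseq Δ b i (k+1) := by
  have h1b : (0:ℝ) < 1 - b := by linarith
  have hI : (0:ℝ) < (i:ℝ) := by exact_mod_cast hi
  have hK : (0:ℝ) ≤ (k:ℝ) := Nat.cast_nonneg k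
  unfold hseq
  push_cast
  have hD1 : 0 < (1 + 2 * (k : ℝ)) * (1 / (1 - b)) + 2 * (i : ℝ) * (b / (1 - b) ^ 2) := by
    positivity
  have hD2 : 0 < (1 + 2 * ((k : ℝ)+1)) * (1 / (1 - b)) + 2 * (i : ℝ) * (b / (1 - b) ^ 2) := by
    positivity
  have hpre : 0 ≤ 2 * Δ / (3 * (i:ℝ)) := by positivity
  have rear : ∀ x y : ℝ, 2*Δ/(3*(i:ℝ)) * x / y = (2*Δ/(3*(i:ℝ))) * (x/y) := fun x y => by ring
  rw [rear, rear]
  apply mul_le_mul_of_nonneg_left _ hpre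
  rw [div_le_div_iff₀ hD1 hD2]
  have e : ∀ x y : ℝ, x ≤ y ↔ 0 ≤ y - x := fun x y => by constructor <;> intro <;> linarith
  rw [e]
  have key : (3 * (i : ℝ) ^ 2 * ((b + b ^ 2) / (1 - b) ^ 3) +
      (6 * (i : ℝ) * ((k : ℝ)+1) + 3 * (i : ℝ)) * (b / (1 - b) ^ 2) +
      (1 + 3 * ((k : ℝ)+1) + 3 * ((k : ℝ)+1) ^ 2) * (1 / (1 - b))) *
      ((1 + 2 * (k : ℝ)) * (1 / (1 - b)) + 2 * (i : ℝ) * (b / (1 - b) ^ 2)) -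
      (3 * (i : ℝ) ^ 2 * ((b + b ^ 2) / (1 - b) ^ 3) +
      (6 * (i : ℝ) * (k : ℝ) + 3 * (i : ℝ)) * (b / (1 - b) ^ 2) +
      (1 + 3 * (k : ℝ) + 3 * (k : ℝ) ^ 2) * (1 / (1 - b))) *
      ((1 + 2 * ((k : ℝ)+1)) * (1 / (1 - b)) + 2 * (i : ℝ) * (b / (1 - b) ^ 2))
      = fpoly b i k / (1-b)^3 := by
    unfold fpoly
    field_simp
    ring
  rw [key]
  positivity

lemma hstep_anti (Δ b : ℝ) (hΔ : 0 < Δ) (hb : 0 < b) (hb1 : b < 1) (i k : ℕ)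
    (hi : 1 ≤ i) (hf : fpoly b i k ≤ 0) : hseq Δ b i (k+1) ≤ hseq Δ b i k := by
  have h1b : (0:ℝ) < 1 - b := by linarith
  have hI : (0:ℝ) < (i:ℝ) := by exact_mod_cast hi
  have hK : (0:ℝ) ≤ (k:ℝ) := Nat.cast_nonneg k
  unfold hseq
  push_cast
  have hD1 : 0 < (1 + 2 * (k : ℝ)) * (1 / (1 - b)) + 2 * (i : ℝ) * (b / (1 - b) ^ 2) := by
    positivity
  have hD2 : 0 < (1 + 2 * ((k : ℝ)+1)) * (1 / (1 - b)) + 2 * (i : ℝ) * (b / (1 - b) ^ 2) := by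
    positivity
  have hpre : 0 ≤ 2 * Δ / (3 * (i:ℝ)) := by positivity
  have rear : ∀ x y : ℝ, 2*Δ/(3*(i:ℝ)) * x / y = (2*Δ/(3*(i:ℝ))) * (x/y) := fun x y => by ring
  rw [rear, rear]
  apply mul_le_mul_of_nonneg_left _ hpre
  rw [div_le_div_iff₀ hD2 hD1]
  have e : ∀ x y : ℝ, x ≤ y ↔ 0 ≤ y - x := fun x y => by constructor <;> intro <;> linarith
  rw [e]
  have key : (3 * (i : ℝ) ^ 2 * ((b + b ^ 2) / (1 - b) ^ 3) +
      (6 * (i : ℝ) * (k : ℝ) + 3 * (i : ℝ)) * (b / (1 - b) ^ 2) +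
      (1 + 3 * (k : ℝ) + 3 * (k : ℝ) ^ 2) * (1 / (1 - b))) *
      ((1 + 2 * ((k : ℝ)+1)) * (1 / (1 - b)) + 2 * (i : ℝ) * (b / (1 - b) ^ 2)) -
      (3 * (i : ℝ) ^ 2 * ((b + b ^ 2) / (1 - b) ^ 3) +
      (6 * (i : ℝ) * ((k : ℝ)+1) + 3 * (i : ℝ)) * (b / (1 - b) ^ 2) +
      (1 + 3 * ((k : ℝ)+1) + 3 * ((k : ℝ)+1) ^ 2) * (1 / (1 - b))) *
      ((1 + 2 * (k : ℝ)) * (1 / (1 - b)) + 2 * (i : ℝ) * (b / (1 - b) ^ 2))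
      = (-(fpoly b i k)) / (1-b)^3 := by
    unfold fpoly
    field_simp
    ring
  rw [key]
  apply div_nonneg (by linarith) (by positivity)

lemma fpoly_mono (b : ℝ) (hb : 0 < b) (hb1 : b < 1) (i : ℕ) {k l : ℕ} (hkl : k ≤ l) :
    fpoly b i k ≤ fpoly b i l := by
  unfold fpoly
  have hI : (0:ℝ) ≤ (i:ℝ) := Nat.cast_nonneg i
  have hK : (0:ℝ) ≤ (k:ℝ) := Nat.cast_nonneg k
  have hKL : (k:ℝ) ≤ (l:ℝ) := by exact_mod_cast hkl
  nlinarith [mul_nonneg hI (sub_nonneg.mpr hKL), mul_nonneg (sub_nonneg.mpr hKL) (sub_nonneg.mpr hKL),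
    mul_nonneg hK (sub_nonneg.mpr hKL)]

lemma chain_anti (g : ℕ → ℝ) (m : ℕ) (hstep : ∀ k, k + 1 ≤ m → g (k+1) ≤ g k) :
    ∀ k l : ℕ, k ≤ l → l ≤ m → g l ≤ g k := by
  intro k l hkl hlm
  induction l with
  | zero => simp_all
  | succ n ih =>
    rcases Nat.lt_or_ge k (n+1) with h | h
    · exact le_trans (hstep n hlm) (ih (Nat.lt_succ_iff.mp h) (by omega))
    · have : k = n + 1 := le_antisymm hkl h
      simp [this]

lemma chain_mono_from (g : ℕ → ℝ) (a m : ℕ)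
    (hstep : ∀ k, a ≤ k → k + 1 ≤ m → g k ≤ g (k+1)) :
    ∀ k l : ℕ, a ≤ k → k ≤ l → l ≤ m → g k ≤ g l := by
  intro k l hak hkl hlm
  induction l with
  | zero => simp_all
  | succ n ih =>
    rcases Nat.lt_or_ge k (n+1) with h | h
    · exact le_trans (ih (Nat.lt_succ_iff.mp h) (by omega)) (hstep n (by omega) hlm)
    · have : k = n + 1 := le_antisymm hkl h
      simp [this]

/-- When b·(6i² − 6i + 1) > 1, the sequence (h_k)_{0 ≤ k ≤ i−1} is unimodal with a
minimum: it first decreases and then increases. -/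
theorem hseq_unimodal (Δ b : ℝ) (hΔ : 0 < Δ) (hb : 0 < b) (hb1 : b < 1)
    (i : ℕ) (hi : 2 ≤ i)
    (hcond : 1 < b * (6 * (i : ℝ) ^ 2 - 6 * (i : ℝ) + 1)) :
    ∃ kstar : ℕ, kstar ≤ i - 1 ∧
      (∀ k l : ℕ, k ≤ l → l ≤ kstar → hseq Δ b i l ≤ hseq Δ b i k) ∧
      (∀ k l : ℕ, kstar ≤ k → k ≤ l → l ≤ i - 1 → hseq Δ b i k ≤ hseq Δ b i l) := by
  have hi1 : 1 ≤ i := by omega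
  have hI : (0:ℝ) ≤ (i:ℝ) := Nat.cast_nonneg i
  -- f is eventually nonnegative: f(i) ≥ 0
  have hex : ∃ k : ℕ, 0 ≤ fpoly b i k := by
    refine ⟨i, ?_⟩
    unfold fpoly
    nlinarith [mul_nonneg (mul_nonneg hI hI) hb.le, mul_nonneg hI hb.le,
      mul_nonneg (mul_nonneg hI hI) (by linarith : (0:ℝ) ≤ 1 - b), mul_nonneg hI (by linarith : (0:ℝ) ≤ 1 - b)]
  classical
  set n := Nat.find hex with hn
  refine ⟨min n (i-1), Nat.min_le_right _ _, ?_, ?_⟩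
  · -- decreasing part
    apply chain_anti
    intro k hk1
    apply hstep_anti Δ b hΔ hb hb1 i k hi1
    have hkn : k < n := by omega
    have := Nat.find_min hex hkn
    linarith [lt_of_not_ge this]
  · -- increasing part
    apply chain_mono_from
    intro k hak hk1
    apply hstep_mono Δ b hΔ hb hb1 i k hi1
    rcases le_or_gt n (i-1) with h | h
    · exact le_trans (Nat.find_spec hex) (fpoly_mono b hb hb1 i (by omega : n ≤ k))
    · omega
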